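/- arXiv:1501.05971 — 3 statements merged into one kernel-verified Lean document; each statement's English description precedes it below -/
import Mathlib

section
/- Let {d_1, …, d_{k-1}} be linearly independent with dual basis {b_1^old, …, b_{k-1}^old} in V_{k-1} = span{d_1,…,d_{k-1}}. Adjoin d_k ∉ V_{k-1}, and let b_k be the new k-th dual vector in V_k = span{d_1,…,d_k}. Then the updated dual vectors b_n = b_n^old − b_k ⟨d_k, b_n^old⟩, for n = 1, …, k−1, together with b_k, form the dual basis of {d_1, …, d_k} in V_k. -/
open scoped RealInnerProductSpace BigOperators

/-- update recursion for the dual basis when an atom `d_k` is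
adjoined: `b_n = b_n^old − ⟨d_k, b_n^old⟩ b_k`, together with `b_k = w_k/‖w_k‖²`,
form the dual basis of `{d_1,…,d_k}` in `V_k`. -/
theorem stmt_6 (Nb k : ℕ) (d : Fin (k + 1) → EuclideanSpace ℝ (Fin Nb))
    (hind : LinearIndependent ℝ d)
    (bold : Fin k → EuclideanSpace ℝ (Fin Nb))
    (hboldV : ∀ n, bold n ∈
      Submodule.span ℝ (Set.range fun i : Fin k => d i.castSucc))
    (hboldbi : ∀ n m : Fin k, ⟪d n.castSucc, bold m⟫ = if n = m then 1 else 0)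
    (w : EuclideanSpace ℝ (Fin Nb))
    (hw : w = d (Fin.last k) -
      (Submodule.orthogonalProjection
        (Submodule.span ℝ (Set.range fun i : Fin k => d i.castSucc))
        (d (Fin.last k)) : EuclideanSpace ℝ (Fin Nb)))
    (bk : EuclideanSpace ℝ (Fin Nb)) (hbk : bk = (‖w‖ ^ 2)⁻¹ • w)
    (b : Fin (k + 1) → EuclideanSpace ℝ (Fin Nb))
    (hblast : b (Fin.last k) = bk)
    (hbcast : ∀ n : Fin k,
      b n.castSucc = bold n - ⟪d (Fin.last k), bold n⟫ • bk) :
    (∀ n, b n ∈ Submodule.span ℝ (Set.range d)) ∧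
      ∀ n m, ⟪d n, b m⟫ = if n = m then 1 else 0 := by
  set V := Submodule.span ℝ (Set.range fun i : Fin k => d i.castSucc) with hV
  have hVle : V ≤ Submodule.span ℝ (Set.range d) := by
    apply Submodule.span_mono
    rintro _ ⟨i, rfl⟩; exact ⟨i.castSucc, rfl⟩
  have hproj : (Submodule.orthogonalProjection V (d (Fin.last k)) : EuclideanSpace ℝ (Fin Nb)) ∈ V :=
    (Submodule.orthogonalProjection V (d (Fin.last k))).2
  have hwOrth : w ∈ Vᗮ := by
    rw [hw, ← Submodule.starProjection_apply]; exact Submodule.sub_starProjection_mem_orthogonal _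
  have hw0 : ∀ v ∈ V, ⟪v, w⟫ = 0 := fun v hv =>
    (Submodule.mem_orthogonal V w).mp hwOrth v hv
  have hdV : ∀ n : Fin k, d n.castSucc ∈ V :=
    fun n => Submodule.subset_span ⟨n, rfl⟩
  have hdlast : d (Fin.last k) ∉ V := by
    have h := hind.notMem_span_image
      (s := Set.range (Fin.castSucc : Fin k → Fin (k+1))) (x := Fin.last k)
      (by rintro ⟨x, hx⟩
          exact (Fin.castSucc_lt_last x).ne hx)
    rw [← Set.range_comp] at h
    exact h
  have hwne : w ≠ 0 := by
    intro h0
    apply hdlast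
    have h1 := hw; rw [h0] at h1
    rw [sub_eq_zero.mp h1.symm]
    exact hproj
  have hnw : ‖w‖ ^ 2 ≠ 0 := pow_ne_zero _ (norm_ne_zero_iff.mpr hwne)
  have hdlw : ⟪d (Fin.last k), w⟫ = ‖w‖ ^ 2 := by
    have hd : d (Fin.last k) =
        w + (Submodule.orthogonalProjection V (d (Fin.last k)) : EuclideanSpace ℝ (Fin Nb)) := by
      rw [hw]; abel
    rw [hd, inner_add_left, real_inner_self_eq_norm_sq,
      hw0 _ hproj, add_zero]
  have hdlbk : ⟪d (Fin.last k), bk⟫ = 1 := by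
    rw [hbk, real_inner_smul_right, hdlw]
    field_simp
  have hdcbk : ∀ n : Fin k, ⟪d n.castSucc, bk⟫ = 0 := by
    intro n
    rw [hbk, real_inner_smul_right, hw0 _ (hdV n), mul_zero]
  have hbkmem : bk ∈ Submodule.span ℝ (Set.range d) := by
    rw [hbk, hw]
    exact Submodule.smul_mem _ _ (Submodule.sub_mem _
      (Submodule.subset_span ⟨Fin.last k, rfl⟩) (hVle hproj))
  constructor
  · intro n
    refine Fin.lastCases ?_ ?_ n
    · rw [hblast]; exact hbkmem
    · intro i
      rw [hbcast i]
      exact Submodule.sub_mem _ (hVle (hboldV i)) (Submodule.smul_mem _ _ hbkmem)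
  · intro n m
    refine Fin.lastCases ?_ ?_ m
    · rw [hblast]
      refine Fin.lastCases ?_ ?_ n
      · simp [hdlbk]
      · intro i
        simp [hdcbk i, (Fin.castSucc_lt_last i).ne]
    · intro j
      rw [hbcast j, inner_sub_right, real_inner_smul_right]
      refine Fin.lastCases ?_ ?_ n
      · simp [hdlbk, (Fin.castSucc_lt_last j).ne']
      · intro i
        rw [hdcbk i, mul_zero, sub_zero, hboldbi i j]
        simp [Fin.castSucc_inj]
end

section
/- Let {d_1, …, d_k} be linearly independent in R^(N_b) with dual basis {b_1, …, b_k} in V = span{d_n}. Fix j, and for n ≠ j define b_n' = b_n − b_j ⟨b_n, b_j⟩/‖b_j‖². Then {b_n'}_{n≠j} is the dual basis of {d_n}_{n≠j} in the reduced span V_{/j} = span{d_n : n ≠ j}. -/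
open scoped RealInnerProductSpace BigOperators

/-- backward biorthogonalization: removing atom `d_j`, the vectors
`b_n' = b_n − (⟨b_n,b_j⟩/‖b_j‖²) b_j`, `n ≠ j`, form the dual basis of
`{d_n}_{n≠j}` in the reduced span. -/
theorem stmt_7 (Nb k : ℕ) (d b : Fin k → EuclideanSpace ℝ (Fin Nb))
    (hind : LinearIndependent ℝ d)
    (hbV : ∀ n, b n ∈ Submodule.span ℝ (Set.range d))
    (hbi : ∀ n m, ⟪d n, b m⟫ = if n = m then 1 else 0)
    (j : Fin k) :
    (∀ n, n ≠ j →
      b n - (⟪b n, b j⟫ / ‖b j‖ ^ 2) • b j ∈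
        Submodule.span ℝ (d '' {i | i ≠ j})) ∧
    ∀ n m, n ≠ j → m ≠ j →
      ⟪d n, b m - (⟪b m, b j⟫ / ‖b j‖ ^ 2) • b j⟫
        = if n = m then 1 else 0 := by
  have hbj : b j ≠ 0 := by
    intro h
    have := hbi j j
    simp [h] at this
  have hnorm : ‖b j‖ ^ 2 ≠ 0 := by
    simpa using hbj
  constructor
  · intro n hn
    set v := b n - (⟪b n, b j⟫ / ‖b j‖ ^ 2) • b j with hv
    have hvV : v ∈ Submodule.span ℝ (Set.range d) :=
      Submodule.sub_mem _ (hbV n) (Submodule.smul_mem _ _ (hbV j))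
    obtain ⟨c, hc⟩ := (Submodule.mem_span_range_iff_exists_fun ℝ).mp hvV
    have hortho : ⟪v, b j⟫ = 0 := by
      rw [hv, inner_sub_left, real_inner_smul_left]
      rw [real_inner_self_eq_norm_sq]
      field_simp
      simp
    have hcj : c j = 0 := by
      rw [← hc, sum_inner] at hortho
      simp only [real_inner_smul_left, hbi] at hortho
      simpa using hortho
    rw [← hc]
    apply Submodule.sum_mem
    intro i _
    by_cases hij : i = j
    · simp [hij, hcj]
    · exact Submodule.smul_mem _ _ (Submodule.subset_span ⟨i, hij, rfl⟩)
  · intro n m hn hm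
    rw [inner_sub_right, real_inner_smul_right, hbi, hbi]
    simp [hn]
end

section
/- Let {d_1, …, d_k} be linearly independent with dual basis {b_1, …, b_k} in V, let f ∈ R^(N_b), c_n = ⟨b_n, f⟩, so P_V f = Σ_n c_n d_n. Removing atom d_j, the projection onto the reduced span V_{/j} is P_{V_{/j}} f = Σ_{n≠j} c_n' d_n with updated coefficients c_n' = c_n − c_j ⟨b_j, b_n⟩/‖b_j‖². -/
open scoped RealInnerProductSpace BigOperators

/-- Any element of the span of `d` expands with coefficients given by the dual basis `b`. -/
lemma dual_expansion {Nb k : ℕ} (d b : Fin k → EuclideanSpace ℝ (Fin Nb))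
    (hbi : ∀ n m, ⟪d n, b m⟫ = if n = m then 1 else 0)
    {v : EuclideanSpace ℝ (Fin Nb)} (hv : v ∈ Submodule.span ℝ (Set.range d)) :
    v = ∑ n, ⟪b n, v⟫ • d n := by
  obtain ⟨a, rfl⟩ := (Submodule.mem_span_range_iff_exists_fun ℝ).1 hv
  refine Finset.sum_congr rfl fun m _ => ?_
  congr 1
  rw [inner_sum]
  simp only [real_inner_smul_right]
  rw [Finset.sum_eq_single m]
  · rw [real_inner_comm, hbi, if_pos rfl, mul_one]
  · intro n _ hn
    rw [real_inner_comm, hbi, if_neg hn, mul_zero]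
  · simp

/-- coefficient update upon removal of atom `d_j`:
`P_{V/j} f = ∑_{n≠j} (c_n − c_j ⟨b_j,b_n⟩/‖b_j‖²) d_n` with `c_n = ⟨b_n, f⟩`. -/
theorem stmt_8 (Nb k : ℕ) (d b : Fin k → EuclideanSpace ℝ (Fin Nb))
    (hind : LinearIndependent ℝ d)
    (V : Submodule ℝ (EuclideanSpace ℝ (Fin Nb)))
    (hV : V = Submodule.span ℝ (Set.range d))
    (hbV : ∀ n, b n ∈ V)
    (hbi : ∀ n m, ⟪d n, b m⟫ = if n = m then 1 else 0)
    (f : EuclideanSpace ℝ (Fin Nb)) (j : Fin k) :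
    (Submodule.orthogonalProjection (Submodule.span ℝ (d '' {i | i ≠ j})) f :
        EuclideanSpace ℝ (Fin Nb))
      = ∑ n ∈ Finset.univ.erase j,
          (⟪b n, f⟫ - ⟪b j, f⟫ * ⟪b j, b n⟫ / ‖b j‖ ^ 2) • d n := by
  subst hV
  set V := Submodule.span ℝ (Set.range d) with hVdef
  set W := Submodule.span ℝ (d '' {i | i ≠ j}) with hWdef
  set w : EuclideanSpace ℝ (Fin Nb) :=
    ∑ n ∈ Finset.univ.erase j, (⟪b n, f⟫ - ⟪b j, f⟫ * ⟪b j, b n⟫ / ‖b j‖ ^ 2) • d n with hw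
  have hWV : W ≤ V := Submodule.span_mono (Set.image_subset_range _ _)
  -- `b j ≠ 0`
  have hbj : ‖b j‖ ^ 2 ≠ 0 := by
    intro h
    have hb0 : b j = 0 := by
      have := (pow_eq_zero_iff (n := 2) two_ne_zero).1 h
      simpa using this
    have h1 := hbi j j
    rw [hb0, if_pos rfl] at h1
    simp at h1
  -- the orthogonal projection of `f` on `V`
  set p : EuclideanSpace ℝ (Fin Nb)   := (Submodule.orthogonalProjection V f : EuclideanSpace ℝ (Fin Nb))
    with hp
  have hpV : p ∈ V := (Submodule.orthogonalProjection V f).2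
  have hfp : ∀ u ∈ V, ⟪f - p, u⟫ = 0 := by
    intro u hu
    exact Submodule.inner_left_of_mem_orthogonal hu
      (by have := V.sub_starProjection_mem_orthogonal f; rwa [Submodule.starProjection_apply] at this)
  -- coefficients of `p` are `⟪b n, f⟫`
  have hcoef : ∀ n, ⟪b n, p⟫ = ⟪b n, f⟫ := by
    intro n
    have h0 : ⟪f - p, b n⟫ = 0 := hfp _ (hbV n)
    rw [inner_sub_left] at h0
    have h1 := sub_eq_zero.1 h0
    exact (real_inner_comm _ _).trans (h1.symm.trans (real_inner_comm _ _))
  -- expansion of `p`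
  have hpexp : p = ∑ n, ⟪b n, f⟫ • d n := by
    rw [dual_expansion d b hbi hpV]
    exact Finset.sum_congr rfl fun n _ => by rw [hcoef]
  -- expansion of `b j`
  have hbjexp : b j = ∑ n, ⟪b n, b j⟫ • d n := dual_expansion d b hbi (hbV j)
  -- key identity: `p - w = (⟪b j, f⟫ / ‖b j‖²) • b j`
  have hkey : p - w = (⟪b j, f⟫ / ‖b j‖ ^ 2) • b j := by
    have hrhs : (⟪b j, f⟫ / ‖b j‖ ^ 2) • b j
        = ∑ n, ((⟪b j, f⟫ / ‖b j‖ ^ 2) * ⟪b n, b j⟫) • d n := by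
      nth_rw 3 [hbjexp]
      rw [Finset.smul_sum]
      exact Finset.sum_congr rfl fun n _ => by rw [smul_smul]
    rw [hpexp, hw, hrhs, ← Finset.sum_erase_add _ _ (Finset.mem_univ j),
      ← Finset.sum_erase_add _ _ (Finset.mem_univ j), add_sub_right_comm]
    congr 1
    · rw [← Finset.sum_sub_distrib]
      refine Finset.sum_congr rfl fun n hn => ?_
      rw [← sub_smul]
      congr 1
      rw [real_inner_comm (b n) (b j)]
      ring
    · rw [real_inner_self_eq_norm_sq]
      congr 1
      have hbj' : ‖b j‖ ≠ 0 := fun h => hbj (by rw [h]; ring)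
      field_simp
  -- `w ∈ W`
  have hwW : w ∈ W := by
    refine Submodule.sum_mem _ fun n hn => Submodule.smul_mem _ _ ?_
    exact Submodule.subset_span ⟨n, Finset.mem_erase.1 hn |>.1, rfl⟩
  -- `b j ⊥ W`
  have hbjW : ∀ u ∈ W, ⟪b j, u⟫ = 0 := by
    intro u hu
    induction hu using Submodule.span_induction with
    | mem x hx =>
      obtain ⟨m, hm, rfl⟩ := hx
      rw [real_inner_comm, hbi, if_neg hm]
    | zero => simp
    | add x y _ _ hx hy => rw [inner_add_right, hx, hy, add_zero]
    | smul c x _ hx => rw [real_inner_smul_right, hx, mul_zero]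
  -- conclude
  refine (Submodule.starProjection_apply _ _).symm.trans
    (Submodule.eq_starProjection_of_mem_of_inner_eq_zero hwW fun u hu => ?_)
  have : f - w = (f - p) + (⟪b j, f⟫ / ‖b j‖ ^ 2) • b j := by
    rw [← hkey]; abel
  rw [this, inner_add_left, hfp u (hWV hu), real_inner_smul_left, hbjW u hu,
    mul_zero, add_zero]
end
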